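/- Let m be an odd squarefree positive integer and ζ = exp(2πi/(4m)). Then the set {ζ^k : 1 ≤ k ≤ 2m, gcd(k, 2m) = 1} is linearly independent over ℚ. -/

import Mathlib

open Polynomial Finset

/-- Powers of a primitive root agree when exponents agree mod `n`. -/
private lemma prim_pow_eq_of_cast_eq {n : ℕ} {ζ : ℂ} (h : IsPrimitiveRoot ζ n) {a b : ℕ}
    (hab : (a : ZMod n) = (b : ZMod n)) : ζ ^ a = ζ ^ b := by
  have key : ∀ c : ℕ, ζ ^ c = ζ ^ (c % n) := by
    intro c
    conv_lhs => rw [← Nat.div_add_mod c n]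
    rw [pow_add, pow_mul, h.pow_eq_one, one_pow, one_mul]
  have hmod : a % n = b % n := (ZMod.natCast_eq_natCast_iff a b n).mp hab
  rw [key a, key b, hmod]

private lemma exists_mul_cast_eq_one {a n : ℕ} [NeZero n] (h : Nat.Coprime a n) :
    ∃ b : ℕ, ((b * a : ℕ) : ZMod n) = 1 := by
  refine ⟨(((ZMod.unitOfCoprime a h)⁻¹ : (ZMod n)ˣ) : ZMod n).val, ?_⟩
  push_cast
  rw [ZMod.natCast_val, ZMod.cast_id, ← ZMod.coe_unitOfCoprime a h, ← Units.val_mul,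
    inv_mul_cancel, Units.val_one]

/-- Any power of a primitive `p`-th root of unity (`p` prime) lies in the span of
the primitive powers. -/
private lemma prime_pow_mem_span {p : ℕ} (hp : p.Prime) {ι : ℂ} (h : IsPrimitiveRoot ι p)
    (s : ℕ) :
    ι ^ s ∈ Submodule.span ℚ (Set.range fun i : (ZMod p)ˣ => ι ^ (i : ZMod p).val) := by
  haveI : NeZero p := ⟨hp.pos.ne'⟩
  by_cases hd : p ∣ s
  · rw [(h.pow_eq_one_iff_dvd s).mpr hd]
    have hsum := h.geom_sum_eq_zero hp.one_lt
    rw [Finset.range_eq_Ico, Finset.sum_eq_sum_Ico_succ_bot hp.pos] at hsum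
    rw [pow_zero] at hsum
    rw [eq_neg_of_add_eq_zero_left hsum]
    refine Submodule.neg_mem _ (Submodule.sum_mem _ ?_)
    intro i hi
    rw [Finset.mem_Ico] at hi
    have hcop : Nat.Coprime i p :=
      ((Nat.Prime.coprime_iff_not_dvd hp).mpr (Nat.not_dvd_of_pos_of_lt (by omega) hi.2)).symm
    refine Submodule.subset_span ⟨ZMod.unitOfCoprime i hcop, ?_⟩
    simp only [ZMod.coe_unitOfCoprime, ZMod.val_natCast]
    rw [Nat.mod_eq_of_lt hi.2]
  · have hcop : Nat.Coprime s p :=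
      ((Nat.Prime.coprime_iff_not_dvd hp).mpr hd).symm
    refine Submodule.subset_span ⟨ZMod.unitOfCoprime s hcop, ?_⟩
    simp only [ZMod.coe_unitOfCoprime, ZMod.val_natCast]
    exact (prim_pow_eq_of_cast_eq h (by simp [ZMod.natCast_mod])).symm

/-- For squarefree `n`, every power of a primitive `n`-th root of unity lies in the
rational span of the primitive powers. -/
private lemma pow_mem_span_units :
    ∀ n : ℕ, 0 < n → Squarefree n → ∀ ω : ℂ, IsPrimitiveRoot ω n → ∀ t : ℕ,
      ω ^ t ∈ Submodule.span ℚ (Set.range fun a : (ZMod n)ˣ => ω ^ (a : ZMod n).val) := by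
  intro n
  induction n using Nat.strong_induction_on with
  | _ n ih =>
  intro hn hsf ω hω t
  rcases eq_or_lt_of_le (show 1 ≤ n from hn) with h1 | h1
  · -- n = 1
    have hω1 : ω = 1 := by
      have := hω.pow_eq_one
      rwa [← h1, pow_one] at this
    subst hω1
    refine Submodule.subset_span ⟨1, ?_⟩
    simp
  · -- n > 1
    set p := n.minFac with hp_def
    have hp : p.Prime := Nat.minFac_prime (by omega)
    have hpdvd : p ∣ n := Nat.minFac_dvd n
    set m := n / p with hm_def
    have hnm : n = p * m := (Nat.mul_div_cancel' hpdvd).symm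
    have hm : 0 < m := by
      rcases Nat.eq_zero_or_pos m with h0 | h0
      · rw [h0, mul_zero] at hnm; omega
      · exact h0
    have hmn : m < n := by
      have h2 : 2 ≤ p := hp.two_le
      nlinarith
    have hsfm : Squarefree m := hsf.squarefree_of_dvd ⟨p, by rw [hnm]; ring⟩
    have hpm : ¬ p ∣ m := by
      intro hdvd
      obtain ⟨c, hc⟩ := hdvd
      have : IsUnit p := hsf p ⟨c, by rw [hnm, hc]; ring⟩
      exact hp.one_lt.ne' (Nat.isUnit_iff.mp this)
    have hcop : Nat.Coprime p m := (Nat.Prime.coprime_iff_not_dvd hp).mpr hpm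
    haveI : NeZero p := ⟨hp.pos.ne'⟩
    haveI : NeZero m := ⟨hm.ne'⟩
    have hωp : IsPrimitiveRoot (ω ^ m) p := hω.pow hn (by rw [hnm]; ring)
    have hωm : IsPrimitiveRoot (ω ^ p) m := hω.pow hn hnm
    obtain ⟨u, hu⟩ := exists_mul_cast_eq_one (n := p) hcop.symm
    obtain ⟨v, hv⟩ := exists_mul_cast_eq_one (n := m) hcop
    -- hu : ((u * m : ℕ) : ZMod p) = 1, hv : ((v * p : ℕ) : ZMod m) = 1
    have hX : ω ^ (u * m + v * p) = ω := by
      have hXp : (u * m + v * p) ≡ 1 [MOD p] := by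
        rw [← ZMod.natCast_eq_natCast_iff]
        push_cast
        push_cast at hu
        simp [hu, ZMod.natCast_self]
      have hXm : (u * m + v * p) ≡ 1 [MOD m] := by
        rw [← ZMod.natCast_eq_natCast_iff]
        push_cast
        push_cast at hv
        simp [hv, ZMod.natCast_self]
      have hXn : (u * m + v * p) ≡ 1 [MOD n] := by
        rw [hnm]
        exact (Nat.modEq_and_modEq_iff_modEq_mul hcop).mp ⟨hXp, hXm⟩
      have := prim_pow_eq_of_cast_eq hω ((ZMod.natCast_eq_natCast_iff _ _ _).mpr hXn)
      rwa [pow_one] at this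
    have hsplit : ω ^ t = (ω ^ m) ^ (u * t) * (ω ^ p) ^ (v * t) := by
      calc ω ^ t = (ω ^ (u * m + v * p)) ^ t := by rw [hX]
      _ = ω ^ (m * (u * t)) * ω ^ (p * (v * t)) := by
          rw [← pow_mul, ← pow_add]; ring_nf
      _ = (ω ^ m) ^ (u * t) * (ω ^ p) ^ (v * t) := by rw [← pow_mul, ← pow_mul]
    rw [hsplit]
    have memp := prime_pow_mem_span hp hωp (u * t)
    have memm := ih m hmn hm hsfm (ω ^ p) hωm (v * t)
    have hmul := Submodule.mul_mem_mul memp memm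
    rw [Submodule.span_mul_span] at hmul
    refine Submodule.span_le.mpr ?_ hmul
    rintro z hz
    rw [Set.mem_mul] at hz
    obtain ⟨za, ⟨i, rfl⟩, zb, ⟨b, rfl⟩, rfl⟩ := hz
    -- za * zb = (ω^m)^(i.val) * (ω^p)^(b.val) = ω^(m * i.val + p * b.val)
    set c := m * (i : ZMod p).val + p * (b : ZMod m).val with hc_def
    have hccop : Nat.Coprime c n := by
      rw [hnm, Nat.coprime_mul_iff_right]
      constructor
      · have h1 : Nat.Coprime (m * (i : ZMod p).val) p :=
          Nat.Coprime.mul hcop.symm (ZMod.val_coe_unit_coprime i)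
        rw [hc_def]
        rw [Nat.coprime_add_mul_left_left _ _ _]
        exact h1
      · have h1 : Nat.Coprime (p * (b : ZMod m).val) m :=
          Nat.Coprime.mul hcop (ZMod.val_coe_unit_coprime b)
        rw [hc_def, add_comm]
        rw [Nat.coprime_add_mul_left_left _ _ _]
        exact h1
    refine Submodule.subset_span ⟨ZMod.unitOfCoprime c hccop, ?_⟩
    simp only [ZMod.coe_unitOfCoprime, ZMod.val_natCast]
    have : ω ^ (c % n) = ω ^ c := prim_pow_eq_of_cast_eq hω (by simp [ZMod.natCast_mod])
    rw [this, hc_def, pow_add, pow_mul, pow_mul]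

/-- The primitive `n`-th roots of unity are linearly independent over `ℚ` when `n` is
squarefree. -/
private lemma units_linearIndependent {n : ℕ} (hn : 0 < n) (hsf : Squarefree n) {ω : ℂ}
    (hω : IsPrimitiveRoot ω n) :
    LinearIndependent ℚ (fun a : (ZMod n)ˣ => ω ^ (a : ZMod n).val) := by
  haveI : NeZero n := ⟨hn.ne'⟩
  rw [linearIndependent_iff_card_le_finrank_span, ZMod.card_units_eq_totient]
  have hspan : Submodule.span ℚ (Set.range fun a : (ZMod n)ˣ => ω ^ (a : ZMod n).val)
      = Submodule.span ℚ (Set.range fun t : ℕ => ω ^ t) := by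
    apply le_antisymm
    · refine Submodule.span_le.mpr ?_
      rintro z ⟨a, rfl⟩
      exact Submodule.subset_span ⟨(a : ZMod n).val, rfl⟩
    · refine Submodule.span_le.mpr ?_
      rintro z ⟨t, rfl⟩
      exact pow_mem_span_units n hn hsf ω hω t
  have hint : IsIntegral ℚ ω := by
    refine ⟨X ^ n - C 1, ?_, ?_⟩
    · simpa using monic_X_pow_sub_C (1 : ℚ) hn.ne'
    · simp [hω.pow_eq_one]
  have hadj : Submodule.span ℚ (Set.range fun t : ℕ => ω ^ t)
      = Subalgebra.toSubmodule (Algebra.adjoin ℚ {ω}) := by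
    rw [Algebra.adjoin_eq_span]
    congr 1
    ext z
    simp [Submonoid.mem_closure_singleton, eq_comm]
  have hfr : Module.finrank ℚ (Algebra.adjoin ℚ {ω}) = n.totient := by
    rw [(Algebra.adjoin.powerBasis hint).finrank, Algebra.adjoin.powerBasis_dim,
      ← Polynomial.cyclotomic_eq_minpoly_rat hω hn, Polynomial.natDegree_cyclotomic]
  rw [Set.finrank, hspan, hadj]
  exact le_of_eq hfr.symm

/-- For an odd squarefree positive integer `m` and `ζ = exp(2πi/(4m))`, the set
`{ζ^k : 1 ≤ k ≤ 2m, gcd(k, 2m) = 1}` is linearly independent over `ℚ`. -/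
theorem linearIndependent_pow_root_four_mul_squarefree (m : ℕ) (hm : 0 < m)
    (hodd : Odd m) (hsf : Squarefree m) :
    LinearIndependent ℚ
      (fun k : {k : ℕ // 1 ≤ k ∧ k ≤ 2 * m ∧ Nat.gcd k (2 * m) = 1} =>
        Complex.exp (2 * Real.pi * Complex.I / (4 * m)) ^ (k : ℕ)) := by
  haveI : NeZero m := ⟨hm.ne'⟩
  set ζ := Complex.exp (2 * Real.pi * Complex.I / (4 * m)) with hζ_def
  have hζ : IsPrimitiveRoot ζ (4 * m) := by
    have := Complex.isPrimitiveRoot_exp (4 * m) (by positivity)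
    convert this using 3
    push_cast
    ring
  set ω := ζ ^ 4 with hω_def
  set ι := ζ ^ m with hι_def
  have hω : IsPrimitiveRoot ω m := hζ.pow (by positivity) rfl
  have hι : IsPrimitiveRoot ι 4 := hζ.pow (by positivity) (by ring)
  have hι2 : ι ^ 2 = -1 := by
    have h4 : (ι ^ 2) ^ 2 = 1 := by
      rw [← pow_mul]
      exact hι.pow_eq_one
    rcases sq_eq_one_iff.mp h4 with h | h
    · exfalso
      have := (hι.pow_eq_one_iff_dvd 2).mp h
      omega
    · exact h
  have hιne : ι ≠ 0 := by
    intro h0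
    have := hι.pow_eq_one
    rw [h0] at this
    simp at this
  have hc4m : Nat.Coprime 4 m := by
    have : Nat.Coprime 2 m := Nat.coprime_two_left.mpr hodd
    exact (show (4 : ℕ) = 2 ^ 2 by norm_num) ▸ this.pow_left 2
  obtain ⟨x, hx⟩ := exists_mul_cast_eq_one (n := m) hc4m.symm.symm
  -- hx : ((x * 4 : ℕ) : ZMod m) = 1
  haveI : NeZero 4 := ⟨by norm_num⟩
  obtain ⟨y, hy⟩ := exists_mul_cast_eq_one (n := 4) (hc4m.symm)
  -- hy : ((y * m : ℕ) : ZMod 4) = 1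
  have hyodd : Odd y := by
    have hmod : (y * m) % 4 = 1 % 4 := (ZMod.natCast_eq_natCast_iff _ _ _).mp (by
      rw [hy]; exact (Nat.cast_one (R := ZMod 4)).symm)
    rcases Nat.even_or_odd y with he | ho
    · exfalso
      obtain ⟨d, hd⟩ := he.mul_right m
      omega
    · exact ho
  have hζeq : ζ ^ (x * 4 + y * m) = ζ := by
    have hXm : (x * 4 + y * m) ≡ 1 [MOD m] := by
      rw [← ZMod.natCast_eq_natCast_iff]
      push_cast
      push_cast at hx
      simp [hx, ZMod.natCast_self]
    have hX4 : (x * 4 + y * m) ≡ 1 [MOD 4] := by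
      rw [← ZMod.natCast_eq_natCast_iff]
      push_cast
      push_cast at hy
      simp [hy, (by decide : (4 : ZMod 4) = 0)]
    have hXn : (x * 4 + y * m) ≡ 1 [MOD 4 * m] :=
      (Nat.modEq_and_modEq_iff_modEq_mul hc4m).mp ⟨hX4, hXm⟩
    have := prim_pow_eq_of_cast_eq hζ ((ZMod.natCast_eq_natCast_iff _ _ _).mpr hXn)
    rwa [pow_one] at this
  -- coprimality facts
  have hxcop : Nat.Coprime x m := by
    rw [← ZMod.isUnit_iff_coprime]
    refine IsUnit.of_mul_eq_one ((4 : ℕ) : ZMod m) ?_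
    push_cast at hx
    exact_mod_cast hx
  -- the unit family for ω
  set G : (ZMod m)ˣ → ℂ := fun a => ω ^ (a : ZMod m).val with hG_def
  have hGind : LinearIndependent ℚ G := units_linearIndependent hm hsf hω
  -- the map from our index type to units
  set I := {k : ℕ // 1 ≤ k ∧ k ≤ 2 * m ∧ Nat.gcd k (2 * m) = 1} with hI_def
  have hkcop : ∀ k : I, Nat.Coprime (x * (k : ℕ)) m := by
    intro k
    refine Nat.Coprime.mul hxcop ?_
    have : Nat.Coprime (k : ℕ) (2 * m) := k.2.2.2
    exact Nat.Coprime.coprime_dvd_right ⟨2, by ring⟩ this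
  have hkodd : ∀ k : I, Odd (k : ℕ) := by
    intro k
    have : Nat.Coprime (k : ℕ) 2 :=
      Nat.Coprime.coprime_dvd_right ⟨m, rfl⟩ k.2.2.2
    exact Nat.coprime_two_right.mp this
  set h : I → (ZMod m)ˣ := fun k => ZMod.unitOfCoprime (x * (k : ℕ)) (hkcop k) with hh_def
  have hinj : Function.Injective h := by
    intro k1 k2 heq
    have hcast : ((x * (k1 : ℕ) : ℕ) : ZMod m) = ((x * (k2 : ℕ) : ℕ) : ZMod m) := by
      have := congrArg (fun u : (ZMod m)ˣ => (u : ZMod m)) heq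
      simpa [hh_def, ZMod.coe_unitOfCoprime] using this
    have hk12 : ((k1 : ℕ) : ZMod m) = ((k2 : ℕ) : ZMod m) := by
      have hx' := hx
      push_cast at hcast hx'
      linear_combination 4 * hcast + (((k2 : ℕ) : ZMod m) - ((k1 : ℕ) : ZMod m)) * hx'
    have hmodeq : (k1 : ℕ) ≡ (k2 : ℕ) [MOD m] := (ZMod.natCast_eq_natCast_iff _ _ _).mp hk12
    -- both odd, in [1, 2m], congruent mod m (m odd) ⟹ equal
    obtain ⟨a1, ha1⟩ := hkodd k1
    obtain ⟨a2, ha2⟩ := hkodd k2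
    obtain ⟨b, hb⟩ := hodd
    have hb1 := k1.2.1; have hb2 := k1.2.2.1
    have hb3 := k2.2.1; have hb4 := k2.2.2.1
    have : (k1 : ℕ) = (k2 : ℕ) := by
      rcases le_total (k1 : ℕ) (k2 : ℕ) with hle | hle
      · obtain ⟨c, hc⟩ := (Nat.modEq_iff_dvd' hle).mp hmodeq
        have hclt : c < 2 := by
          by_contra hcge
          push_neg at hcge
          have : 2 * m ≤ m * c := by
            calc 2 * m = m * 2 := by ring
            _ ≤ m * c := Nat.mul_le_mul_left m hcge
          omega
        interval_cases c <;> omega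
      · obtain ⟨c, hc⟩ := (Nat.modEq_iff_dvd' hle).mp hmodeq.symm
        have hclt : c < 2 := by
          by_contra hcge
          push_neg at hcge
          have : 2 * m ≤ m * c := by
            calc 2 * m = m * 2 := by ring
            _ ≤ m * c := Nat.mul_le_mul_left m hcge
          omega
        interval_cases c <;> omega
    exact Subtype.ext this
  -- linear independence of ι * G ∘ h
  have hind1 : LinearIndependent ℚ (G ∘ h) := hGind.comp h hinj
  have hind2 : LinearIndependent ℚ ((LinearMap.mulLeft ℚ ι) ∘ (G ∘ h)) := by
    refine hind1.map' _ (LinearMap.ker_eq_bot.mpr ?_)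
    intro a b hab
    simpa [LinearMap.mulLeft_apply] using mul_left_cancel₀ hιne hab
  -- signs
  set w : I → ℚˣ := fun k => (-1 : ℚˣ) ^ ((y * (k : ℕ)) / 2) with hw_def
  have hind3 := hind2.units_smul w
  convert hind3 using 1
  funext k
  have hyk : Odd (y * (k : ℕ)) := hyodd.mul (hkodd k)
  have hk1 : ζ ^ (k : ℕ) = ω ^ (x * (k : ℕ)) * ι ^ (y * (k : ℕ)) := by
    conv_lhs => rw [← hζeq]
    rw [← pow_mul, show (x * 4 + y * m) * (k : ℕ) = 4 * (x * (k : ℕ)) + m * (y * (k : ℕ)) by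
      ring, pow_add, pow_mul ζ 4, pow_mul ζ m]
  have hιyk : ι ^ (y * (k : ℕ)) = (-1 : ℂ) ^ ((y * (k : ℕ)) / 2) * ι := by
    obtain ⟨j, hj⟩ := hyk
    rw [hj, show (2 * j + 1) / 2 = j by omega, pow_succ, pow_mul, hι2]
  have hGk : G (h k) = ω ^ (x * (k : ℕ)) := by
    simp only [hG_def, hh_def, ZMod.coe_unitOfCoprime, ZMod.val_natCast]
    exact prim_pow_eq_of_cast_eq hω (by simp [ZMod.natCast_mod])
  show ζ ^ (k : ℕ) = w k • ((LinearMap.mulLeft ℚ ι) ((G ∘ h) k))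
  rw [LinearMap.mulLeft_apply, Function.comp_apply, hGk, hk1, hιyk, hw_def]
  rw [Units.smul_def, Rat.smul_def]
  push_cast
  ring
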